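/- Let g₁ = x₁x₂x₃x₄x₅ + x₁x₂x₃x₆x₇ + x₄x₅x₈x₉x₁₀ and g₂ = x₁x₂x₃x₄x₅ + x₁x₆x₇x₈x₉ + x₆x₇x₈x₉x₁₀. Then wt(g₂) = 62 and wt(g₁+g₂) = 78, so 0‖g₁‖g₂‖(g₁+g₂) is a 12-variable function of degree at most 6 and Hamming weight 214. -/

import Mathlib

set_option maxRecDepth 10000
set_option maxHeartbeats 1000000

/-- Boolean functions in `m` variables. -/
abbrev BF (m : ℕ) := (Fin m → ZMod 2) → ZMod 2

/-- Hamming weight of a Boolean function. -/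
def wt {m : ℕ} (f : BF m) : ℕ := (Finset.univ.filter fun x => f x = 1).card

/-- `f` has algebraic degree at most `r`: it is represented by a polynomial of total degree `≤ r`. -/
def degLE {m : ℕ} (f : BF m) (r : ℕ) : Prop :=
  ∃ p : MvPolynomial (Fin m) (ZMod 2), p.totalDegree ≤ r ∧ ∀ x, MvPolynomial.eval x p = f x

/-- The monomial Boolean function with support `I`. -/
def mono {m : ℕ} (I : Finset (Fin m)) : BF m := fun x => ∏ i ∈ I, x i

/-- Concatenation `f₁‖f₂‖f₃‖f₄` of four `m`-variable functions into an `(m+2)`-variable function. -/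
def concat4 {m : ℕ} (f1 f2 f3 f4 : BF m) : BF (m + 2) := fun x =>
  (1 + x ⟨m, by omega⟩) * (1 + x ⟨m + 1, by omega⟩) * f1 (fun i => x (Fin.castLE (by omega) i))
  + x ⟨m, by omega⟩ * (1 + x ⟨m + 1, by omega⟩) * f2 (fun i => x (Fin.castLE (by omega) i))
  + (1 + x ⟨m, by omega⟩) * x ⟨m + 1, by omega⟩ * f3 (fun i => x (Fin.castLE (by omega) i))
  + x ⟨m, by omega⟩ * x ⟨m + 1, by omega⟩ * f4 (fun i => x (Fin.castLE (by omega) i))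

/-- Concatenation `f‖g` of two `m`-variable functions into an `(m+1)`-variable function. -/
def concat2 {m : ℕ} (f g : BF m) : BF (m + 1) := fun x =>
  (1 + x (Fin.last m)) * f (fun i => x i.castSucc) + x (Fin.last m) * g (fun i => x i.castSucc)

lemma concat4_eq {m : ℕ} (f1 f2 f3 f4 : BF m) :
    concat4 f1 f2 f3 f4 = concat2 (concat2 f1 f2) (concat2 f3 f4) := by
  funext x
  show _ = (1 + x (Fin.last (m+1))) * ((1 + x ((Fin.last m).castSucc)) * f1 _ + _) + _
  simp only [concat4, concat2]
  have e1 : x (Fin.last (m+1)) = x ⟨m+1, by omega⟩ := rfl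
  have e2 : x ((Fin.last m).castSucc) = x ⟨m, by omega⟩ := rfl
  rw [e1, e2]
  have e3 : (fun i : Fin m => x i.castSucc.castSucc) = (fun i => x (Fin.castLE (by omega) i)) := rfl
  rw [e3]
  ring

lemma concat2_val0 {m : ℕ} (f g : BF m) (x : Fin (m+1) → ZMod 2) (h : x (Fin.last m) = 0) :
    concat2 f g x = f (fun i => x i.castSucc) := by simp [concat2, h]

lemma concat2_val1 {m : ℕ} (f g : BF m) (x : Fin (m+1) → ZMod 2) (h : x (Fin.last m) = 1) :
    concat2 f g x = g (fun i => x i.castSucc) := by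
  simp [concat2, h, show (1:ZMod 2)+1 = 0 from rfl]

lemma wt_concat2 {m : ℕ} (f g : BF m) : wt (concat2 f g) = wt f + wt g := by
  classical
  unfold wt
  have split : (Finset.univ.filter fun x : Fin (m+1) → ZMod 2 => concat2 f g x = 1)
      = ((Finset.univ.filter fun x => concat2 f g x = 1 ∧ x (Fin.last m) = 0)
        ∪ (Finset.univ.filter fun x => concat2 f g x = 1 ∧ x (Fin.last m) = 1)) := by
    ext x
    simp only [Finset.mem_filter, Finset.mem_union, Finset.mem_univ, true_and]
    have h : x (Fin.last m) = 0 ∨ x (Fin.last m) = 1 := by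
      generalize x (Fin.last m) = c; revert c; decide
    tauto
  rw [split, Finset.card_union_of_disjoint]
  · congr 1
    · refine Finset.card_nbij' (fun x => fun i => x i.castSucc) (fun y => Fin.snoc y 0)
        ?_ ?_ ?_ ?_
      · intro x hx
        simp only [Finset.mem_coe, Finset.mem_filter, Finset.mem_univ, true_and] at hx ⊢
        rw [concat2_val0 f g x hx.2] at hx
        exact hx.1
      · intro y hy
        simp only [Finset.mem_coe, Finset.mem_filter, Finset.mem_univ, true_and] at hy ⊢
        have hl : (Fin.snoc y (0:ZMod 2) : Fin (m+1) → ZMod 2) (Fin.last m) = 0 := by simp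
        refine ⟨?_, hl⟩
        rw [concat2_val0 f g _ hl]
        convert hy using 2
        funext i; exact Fin.snoc_castSucc _ _ _
      · intro x hx
        simp only [Finset.mem_coe, Finset.mem_filter, Finset.mem_univ, true_and] at hx
        funext i
        refine Fin.lastCases ?_ (fun j => ?_) i
        · simpa using hx.2.symm
        · exact Fin.snoc_castSucc _ _ _
      · intro y hy
        funext i; exact Fin.snoc_castSucc _ _ _
    · refine Finset.card_nbij' (fun x => fun i => x i.castSucc) (fun y => Fin.snoc y 1)
        ?_ ?_ ?_ ?_
      · intro x hx
        simp only [Finset.mem_coe, Finset.mem_filter, Finset.mem_univ, true_and] at hx ⊢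
        rw [concat2_val1 f g x hx.2] at hx
        exact hx.1
      · intro y hy
        simp only [Finset.mem_coe, Finset.mem_filter, Finset.mem_univ, true_and] at hy ⊢
        have hl : (Fin.snoc y (1:ZMod 2) : Fin (m+1) → ZMod 2) (Fin.last m) = 1 := by simp
        refine ⟨?_, hl⟩
        rw [concat2_val1 f g _ hl]
        convert hy using 2
        funext i; exact Fin.snoc_castSucc _ _ _
      · intro x hx
        simp only [Finset.mem_coe, Finset.mem_filter, Finset.mem_univ, true_and] at hx
        funext i
        refine Fin.lastCases ?_ (fun j => ?_) i
        · simpa using hx.2.symm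
        · exact Fin.snoc_castSucc _ _ _
      · intro y hy
        funext i; exact Fin.snoc_castSucc _ _ _
  · rw [Finset.disjoint_filter]
    intro x _ hx h2
    rw [hx.2] at h2
    exact absurd h2.2 (by norm_num)

open MvPolynomial in
noncomputable def monoP (I : Finset (Fin 10)) : MvPolynomial (Fin 12) (ZMod 2) :=
  ∏ i ∈ I, X (Fin.castLE (by omega) i)

open MvPolynomial in
lemma monoP_deg (I : Finset (Fin 10)) : (monoP I).totalDegree ≤ I.card := by
  calc (monoP I).totalDegree
      ≤ ∑ i ∈ I, (X (Fin.castLE (by omega) i) : MvPolynomial (Fin 12) (ZMod 2)).totalDegree :=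
        totalDegree_finset_prod _ _
    _ ≤ I.card := by simp [totalDegree_X]

lemma wt_g1 : wt (mono ({0, 1, 2, 3, 4} : Finset (Fin 10)) + mono ({0, 1, 2, 5, 6} : Finset (Fin 10)) + mono ({3, 4, 7, 8, 9} : Finset (Fin 10))) = 74 := by decide

lemma wt_g2 : wt (mono ({0, 1, 2, 3, 4} : Finset (Fin 10)) + mono ({0, 5, 6, 7, 8} : Finset (Fin 10)) + mono ({5, 6, 7, 8, 9} : Finset (Fin 10))) = 62 := by decide

lemma wt_g12 : wt ((mono ({0, 1, 2, 3, 4} : Finset (Fin 10)) + mono ({0, 1, 2, 5, 6} : Finset (Fin 10)) + mono ({3, 4, 7, 8, 9} : Finset (Fin 10))) + (mono ({0, 1, 2, 3, 4} : Finset (Fin 10)) + mono ({0, 5, 6, 7, 8} : Finset (Fin 10)) + mono ({5, 6, 7, 8, 9} : Finset (Fin 10)))) = 78 := by decide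

lemma wt_zero : wt (0 : BF 10) = 0 := by
  unfold wt
  rw [Finset.card_eq_zero, Finset.filter_eq_empty_iff]
  intro x _
  simp

open MvPolynomial in
theorem stmt13 :
    wt (mono ({0, 1, 2, 3, 4} : Finset (Fin 10)) + mono ({0, 5, 6, 7, 8} : Finset (Fin 10)) + mono ({5, 6, 7, 8, 9} : Finset (Fin 10))) = 62 ∧
    wt ((mono ({0, 1, 2, 3, 4} : Finset (Fin 10)) + mono ({0, 1, 2, 5, 6} : Finset (Fin 10)) + mono ({3, 4, 7, 8, 9} : Finset (Fin 10))) + (mono ({0, 1, 2, 3, 4} : Finset (Fin 10)) + mono ({0, 5, 6, 7, 8} : Finset (Fin 10)) + mono ({5, 6, 7, 8, 9} : Finset (Fin 10)))) = 78 ∧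
    degLE (concat4 0 (mono ({0, 1, 2, 3, 4} : Finset (Fin 10)) + mono ({0, 1, 2, 5, 6} : Finset (Fin 10)) + mono ({3, 4, 7, 8, 9} : Finset (Fin 10))) (mono ({0, 1, 2, 3, 4} : Finset (Fin 10)) + mono ({0, 5, 6, 7, 8} : Finset (Fin 10)) + mono ({5, 6, 7, 8, 9} : Finset (Fin 10))) ((mono ({0, 1, 2, 3, 4} : Finset (Fin 10)) + mono ({0, 1, 2, 5, 6} : Finset (Fin 10)) + mono ({3, 4, 7, 8, 9} : Finset (Fin 10))) + (mono ({0, 1, 2, 3, 4} : Finset (Fin 10)) + mono ({0, 5, 6, 7, 8} : Finset (Fin 10)) + mono ({5, 6, 7, 8, 9} : Finset (Fin 10))))) 6 ∧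
    wt (concat4 0 (mono ({0, 1, 2, 3, 4} : Finset (Fin 10)) + mono ({0, 1, 2, 5, 6} : Finset (Fin 10)) + mono ({3, 4, 7, 8, 9} : Finset (Fin 10))) (mono ({0, 1, 2, 3, 4} : Finset (Fin 10)) + mono ({0, 5, 6, 7, 8} : Finset (Fin 10)) + mono ({5, 6, 7, 8, 9} : Finset (Fin 10))) ((mono ({0, 1, 2, 3, 4} : Finset (Fin 10)) + mono ({0, 1, 2, 5, 6} : Finset (Fin 10)) + mono ({3, 4, 7, 8, 9} : Finset (Fin 10))) + (mono ({0, 1, 2, 3, 4} : Finset (Fin 10)) + mono ({0, 5, 6, 7, 8} : Finset (Fin 10)) + mono ({5, 6, 7, 8, 9} : Finset (Fin 10))))) = 214 := by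
  refine ⟨wt_g2, wt_g12, ?_, ?_⟩
  · refine ⟨X ⟨10, by omega⟩ * (monoP {0,1,2,3,4} + monoP {0,1,2,5,6} + monoP {3,4,7,8,9})
       + X ⟨11, by omega⟩ * (monoP {0,1,2,3,4} + monoP {0,5,6,7,8} + monoP {5,6,7,8,9}), ?_, ?_⟩
    · apply le_trans (totalDegree_add _ _)
      apply max_le <;>
      · apply le_trans (totalDegree_mul _ _)
        have hX : ∀ j : Fin 12, (X j : MvPolynomial (Fin 12) (ZMod 2)).totalDegree = 1 :=
          fun j => totalDegree_X _
        have h5 : ∀ I : Finset (Fin 10), I.card ≤ 5 → (monoP I).totalDegree ≤ 5 :=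
          fun I hI => le_trans (monoP_deg I) hI
        calc _ ≤ 1 + 5 := by
                gcongr
                · exact le_of_eq (hX _)
                · exact le_trans (totalDegree_add _ _) (max_le
                    (le_trans (totalDegree_add _ _) (max_le (h5 _ (by decide)) (h5 _ (by decide))))
                    (h5 _ (by decide)))
          _ ≤ 6 := by norm_num
    · intro x
      have key : ∀ a b F G : ZMod 2,
          a * F + b * G =
          (1+a)*(1+b)*0 + a*(1+b)*F + (1+a)*b*G + a*b*(F+G) := by decide
      simp only [monoP, map_add, map_mul, map_prod, eval_X, concat4, mono, Pi.add_apply,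
        Pi.zero_apply]
      exact key _ _ _ _
  · rw [concat4_eq, wt_concat2, wt_concat2, wt_concat2, wt_zero, wt_g1, wt_g2, wt_g12]
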